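/- Let K be an algebraically closed field of characteristic zero and let f ∈ K(x) be proper with squarefree denominator. Then there exists a proper rational function f̄ ∈ K(x) with squarefree denominator such that f - f̄ is rationally summable and either f̄ = 0 or the denominator of f̄ has dispersion 0, and moreover for every ℤ-orbit ω, f̄ has at most one pole in ω and its residue there equals dres(f, ω, 1). -/

import Mathlib

open Polynomial

/-- The shift `f(x) ↦ f(x+1)` on rational functions. -/
noncomputable def shift {K : Type*} [Field K] (f : RatFunc K) : RatFunc K :=
  RatFunc.mk (f.num.comp (Polynomial.X + 1)) (f.denom.comp (Polynomial.X + 1))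

namespace SimpleReductionAux

variable {K : Type*} [Field K]

open scoped nonZeroDivisors

/-- Composition with `X+1` as a ring hom on polynomials. -/
noncomputable def φ : K[X] →+* K[X] :=
  (Polynomial.aeval (Polynomial.X + 1 : K[X])).toRingHom

lemma φ_apply (p : K[X]) : (φ p : K[X]) = p.comp (Polynomial.X + 1) := by
  simp [φ, Polynomial.aeval_def, Polynomial.eval₂_def, Polynomial.comp,
    Polynomial.algebraMap_eq]

lemma φ_injective : Function.Injective (φ (K := K)) := by
  intro p q h
  have h2 := congrArg (fun r : K[X] => r.comp (Polynomial.X - 1)) h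
  simp only [φ_apply, Polynomial.comp_assoc] at h2
  simpa [Polynomial.add_comp, Polynomial.one_comp] using h2

lemma hφ : K[X]⁰ ≤ (K[X]⁰).comap (φ (K := K)) := by
  intro p hp
  rw [Submonoid.mem_comap, mem_nonZeroDivisors_iff_ne_zero]
  intro h0
  rw [mem_nonZeroDivisors_iff_ne_zero] at hp
  exact hp (φ_injective (by simpa using h0))

/-- The shift as a ring hom on rational functions. -/
noncomputable def shiftHom : RatFunc K →+* RatFunc K := RatFunc.mapRingHom φ hφ

lemma shift_eq (f : RatFunc K) : shift f = shiftHom f := by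
  conv_rhs => rw [← RatFunc.num_div_denom f]
  rw [shift, RatFunc.mk_eq_div, shiftHom, RatFunc.coe_mapRingHom_eq_coe_map,
    RatFunc.map_apply_div, φ_apply, φ_apply]

lemma shiftHom_algebraMap (p : K[X]) :
    shiftHom (algebraMap K[X] (RatFunc K) p) =
      algebraMap K[X] (RatFunc K) (p.comp (Polynomial.X + 1)) := by
  have := RatFunc.map_apply_div (φ (K := K)) hφ p 1
  simpa [φ_apply, RatFunc.coe_mapRingHom_eq_coe_map, shiftHom] using this

lemma shiftHom_X : shiftHom (RatFunc.X : RatFunc K) = RatFunc.X + 1 := by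
  rw [← RatFunc.algebraMap_X, shiftHom_algebraMap]
  simp [Polynomial.X_comp, map_add, RatFunc.algebraMap_X]

lemma shiftHom_C (a : K) : shiftHom (RatFunc.C a) = RatFunc.C a := by
  rw [← RatFunc.algebraMap_C, shiftHom_algebraMap]
  simp [Polynomial.C_comp, RatFunc.algebraMap_C]

/-- The submodule of rationally summable functions. -/
noncomputable def S : Submodule K (RatFunc K) where
  carrier := {h | ∃ g, h = shift g - g}
  add_mem' := by
    rintro a b ⟨g1, rfl⟩ ⟨g2, rfl⟩
    exact ⟨g1 + g2, by simp only [shift_eq, map_add]; ring⟩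
  zero_mem' := ⟨0, by simp [shift_eq]⟩
  smul_mem' := by
    rintro k a ⟨g, rfl⟩
    refine ⟨k • g, ?_⟩
    simp only [shift_eq, RatFunc.smul_eq_C_mul, map_mul, shiftHom_C]
    ring

lemma step_mem (γ : K) :
    (RatFunc.X - RatFunc.C (γ - 1))⁻¹ - (RatFunc.X - RatFunc.C γ)⁻¹ ∈ (S (K := K)) := by
  refine ⟨(RatFunc.X - RatFunc.C γ)⁻¹, ?_⟩
  have h1 : shift (RatFunc.X - RatFunc.C γ)⁻¹ = (RatFunc.X + 1 - RatFunc.C γ)⁻¹ := by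
    rw [shift_eq, map_inv₀, map_sub, shiftHom_X, shiftHom_C]
  have h2 : RatFunc.X - RatFunc.C (γ - 1) = RatFunc.X + 1 - RatFunc.C γ := by
    rw [map_sub, map_one]; ring
  rw [h2, h1]

lemma chain_mem (α : K) (n : ℤ) :
    (RatFunc.X - RatFunc.C α)⁻¹ - (RatFunc.X - RatFunc.C (α + (n : K)))⁻¹ ∈ (S (K := K)) := by
  induction n using Int.induction_on with
  | zero => simpa using (S (K := K)).zero_mem
  | succ n ih =>
      push_cast at ih ⊢
      have h := step_mem (K := K) (α + (n : K) + 1)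
      have e1 : α + (n : K) + 1 - 1 = α + (n : K) := by ring
      rw [e1] at h
      have e2 : α + ((n : K) + 1) = α + (n : K) + 1 := by ring
      rw [e2]
      have h3 := (S (K := K)).add_mem ih h
      rwa [sub_add_sub_cancel] at h3
  | pred n ih =>
      push_cast at ih ⊢
      have h := step_mem (K := K) (α + -(n : K))
      have e1 : α + -(n : K) - 1 = α + (-(n : K) - 1) := by ring
      rw [e1] at h
      have h3 := (S (K := K)).sub_mem ih h
      rwa [sub_sub_sub_cancel_right] at h3

/-- Canonical representative of the `ℤ`-orbit of `α`. -/
noncomputable def rep (α : K) : K :=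
  Quotient.out (QuotientAddGroup.mk (s := AddSubgroup.zmultiples (1 : K)) α)

lemma rep_eq_rep {α β : K} (h : ∃ n : ℤ, β = α + (n : K)) : rep α = rep β := by
  obtain ⟨n, rfl⟩ := h
  unfold rep
  congr 1
  rw [QuotientAddGroup.eq]
  refine ⟨n, ?_⟩
  simp [zsmul_eq_mul]

lemma rep_orbit (α : K) : ∃ n : ℤ, rep α = α + (n : K) := by
  have h : (QuotientAddGroup.mk (s := AddSubgroup.zmultiples (1 : K)) (rep α)) =
      QuotientAddGroup.mk (s := AddSubgroup.zmultiples (1 : K)) α := by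
    exact Quotient.out_eq _
  rw [QuotientAddGroup.eq] at h
  obtain ⟨n, hn⟩ := h
  refine ⟨-n, ?_⟩
  simp only [zsmul_eq_mul, mul_one] at hn
  push_cast
  linear_combination hn

lemma rep_rep (α : K) : rep (rep α) = rep α := by
  obtain ⟨n, hn⟩ := rep_orbit α
  exact (rep_eq_rep ⟨n, hn⟩).symm

end SimpleReductionAux

open SimpleReductionAux in
/-- Simple reduction: a proper rational function `f = Σ_α c(α)/(x-α)` with only
simple poles admits a reduced form `f̄ = Σ_α c̄(α)/(x-α)` such that `f - f̄` is
rationally summable, `f̄` has at most one pole in each `ℤ`-orbit, and the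
residue of `f̄` at such a pole equals the first-order discrete residue of `f`
at that orbit. -/
theorem simple_reduction_exists {K : Type*} [Field K] [CharZero K] [IsAlgClosed K]
    (f : RatFunc K) (c : K → K) (hfin : (Function.support c).Finite)
    (hf : f = ∑ᶠ α : K, RatFunc.C (c α) / (RatFunc.X - RatFunc.C α)) :
    ∃ cbar : K → K, (Function.support cbar).Finite ∧
      (∃ g : RatFunc K,
        f - (∑ᶠ α : K, RatFunc.C (cbar α) / (RatFunc.X - RatFunc.C α)) = shift g - g) ∧
      (∀ α β : K, cbar α ≠ 0 → cbar β ≠ 0 → (∃ n : ℤ, β = α + (n : K)) → α = β) ∧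
      (∀ α : K, cbar α ≠ 0 → cbar α = ∑ᶠ n : ℤ, c (α + (n : K))) := by
  classical
  set cbar : K → K := fun β =>
    if rep β = β then ∑ᶠ n : ℤ, c (β + (n : K)) else 0 with hcbar_def
  -- support of cbar
  have hsupp : Function.support cbar ⊆ rep '' (Function.support c) := by
    intro β hβ
    simp only [Function.mem_support, hcbar_def] at hβ
    by_cases hr : rep β = β
    · rw [if_pos hr] at hβ
      have : ∃ n : ℤ, c (β + (n : K)) ≠ 0 := by
        by_contra h
        push_neg at h
        exact hβ (finsum_eq_zero_of_forall_eq_zero h)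
      obtain ⟨n, hn⟩ := this
      refine ⟨β + (n : K), hn, ?_⟩
      rw [← rep_eq_rep ⟨n, rfl⟩, hr]
    · rw [if_neg hr] at hβ; exact absurd rfl hβ
  have hfin' : (Function.support cbar).Finite := (hfin.image rep).subset hsupp
  refine ⟨cbar, hfin', ?_, ?_, ?_⟩
  · -- summability
    set F : Finset K := hfin.toFinset with hF
    set R : Finset K := F.image rep with hR
    -- rewrite f as a Finset sum
    have hf' : f = ∑ α ∈ F, RatFunc.C (c α) / (RatFunc.X - RatFunc.C α) := by
      rw [hf]
      apply finsum_eq_finset_sum_of_support_subset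
      intro α hα
      simp only [Function.mem_support] at hα
      simp only [hF, Set.Finite.coe_toFinset, Function.mem_support]
      intro h0
      exact hα (by simp [h0])
    -- rewrite fbar as a Finset sum over R
    have hbar : (∑ᶠ β : K, RatFunc.C (cbar β) / (RatFunc.X - RatFunc.C β)) =
        ∑ β ∈ R, RatFunc.C (cbar β) / (RatFunc.X - RatFunc.C β) := by
      apply finsum_eq_finset_sum_of_support_subset
      intro β hβ
      simp only [Function.mem_support] at hβ
      have hβ' : cbar β ≠ 0 := by intro h0; exact hβ (by simp [h0])
      have := hsupp hβ'
      obtain ⟨α, hα, hαβ⟩ := this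
      simp only [hR, Finset.coe_image, hF, Set.Finite.coe_toFinset]
      exact ⟨α, hα, hαβ⟩
    -- key orbit-sum identity
    have key : ∀ β : K, rep β = β →
        (∑ᶠ n : ℤ, c (β + (n : K))) = ∑ α ∈ F.filter (fun α => rep α = β), c α := by
      intro β hβ
      have hinj : Function.Injective (fun n : ℤ => β + (n : K)) := by
        intro m n h
        simp only [add_right_inj] at h
        exact_mod_cast h
      have h1 : (∑ᶠ α ∈ Set.range (fun n : ℤ => β + (n : K)), c α) =
          ∑ᶠ n : ℤ, c (β + (n : K)) := finsum_mem_range hinj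
      rw [← h1]
      have hset : Set.range (fun n : ℤ => β + (n : K)) ∩ Function.support c =
          ↑(F.filter (fun α => rep α = β)) := by
        ext α
        constructor
        · rintro ⟨⟨n, rfl⟩, hc⟩
          refine Finset.mem_coe.mpr (Finset.mem_filter.mpr ⟨?_, ?_⟩)
          · simpa [hF] using hc
          · rw [← rep_eq_rep ⟨n, rfl⟩, hβ]
        · intro hα
          obtain ⟨hαF, hrep⟩ := Finset.mem_filter.mp (Finset.mem_coe.mp hα)
          have hc : c α ≠ 0 := by simpa [hF] using hαF
          obtain ⟨m, hm⟩ := rep_orbit α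
          refine ⟨⟨-m, ?_⟩, hc⟩
          have hβα : β = α + (m : K) := by rw [← hrep, hm]
          push_cast
          rw [hβα]; ring
      have hset2 : (↑(F.filter (fun α => rep α = β)) : Set K) ∩ Function.support c =
          ↑(F.filter (fun α => rep α = β)) := by
        apply Set.inter_eq_self_of_subset_left
        intro α hα
        have hαF := (Finset.mem_filter.mp (Finset.mem_coe.mp hα)).1
        simpa [hF] using hαF
      exact finsum_mem_eq_sum_of_inter_support_eq c (hset.trans hset2.symm)
    -- group the f̄ sum by fibers of rep
    have hgroup : (∑ β ∈ R, RatFunc.C (cbar β) / (RatFunc.X - RatFunc.C β)) =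
        ∑ α ∈ F, RatFunc.C (c α) / (RatFunc.X - RatFunc.C (rep α)) := by
      rw [← Finset.sum_fiberwise_of_maps_to (g := rep) (t := R)
        (fun α hα => Finset.mem_image_of_mem rep hα)]
      apply Finset.sum_congr rfl
      intro β hβ
      have hrepβ : rep β = β := by
        obtain ⟨α, _, rfl⟩ := Finset.mem_image.mp hβ
        exact rep_rep α
      have hterm : ∀ α ∈ F.filter (fun α => rep α = β),
          RatFunc.C (c α) / (RatFunc.X - RatFunc.C (rep α)) =
            RatFunc.C (c α) / (RatFunc.X - RatFunc.C β) := by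
        intro α hα
        rw [(Finset.mem_filter.mp hα).2]
      rw [Finset.sum_congr rfl hterm, ← Finset.sum_div, ← map_sum, ← key β hrepβ]
      simp only [hcbar_def, if_pos hrepβ]
    -- membership in S
    have hmem : f - (∑ᶠ β : K, RatFunc.C (cbar β) / (RatFunc.X - RatFunc.C β)) ∈
        (S (K := K)) := by
      rw [hf', hbar, hgroup, ← Finset.sum_sub_distrib]
      apply Submodule.sum_mem
      intro α _
      have : RatFunc.C (c α) / (RatFunc.X - RatFunc.C α) -
          RatFunc.C (c α) / (RatFunc.X - RatFunc.C (rep α)) =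
          c α • ((RatFunc.X - RatFunc.C α)⁻¹ - (RatFunc.X - RatFunc.C (rep α))⁻¹) := by
        rw [smul_sub, RatFunc.smul_eq_C_mul, RatFunc.smul_eq_C_mul,
          div_eq_mul_inv, div_eq_mul_inv]
      rw [this]
      obtain ⟨n, hn⟩ := rep_orbit α
      rw [hn]
      exact Submodule.smul_mem _ _ (chain_mem α n)
    exact hmem
  · -- at most one pole per orbit
    intro α β hα hβ horb
    have hrα : rep α = α := by
      by_contra h; simp only [hcbar_def, if_neg h, ne_eq, not_true_eq_false] at hα
    have hrβ : rep β = β := by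
      by_contra h; simp only [hcbar_def, if_neg h, ne_eq, not_true_eq_false] at hβ
    rw [← hrα, ← hrβ]
    exact rep_eq_rep horb
  · -- residue value
    intro α hα
    have hrα : rep α = α := by
      by_contra h; simp only [hcbar_def, if_neg h, ne_eq, not_true_eq_false] at hα
    simp only [hcbar_def, if_pos hrα]
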